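/- arXiv:2209.15240 — 10 statements merged into one kernel-verified Lean document; each statement's English description precedes it below -/
import Mathlib

section
/- Feature-transformation coverage: Let f(A, X) = 𝟙ᵀ(A + (1+ε)I)·X·Θ with D + N + Nε ≠ 0, where D = Σ_{ij} A_{ij}. Then for any target feature matrix X' ∈ ℝ^{N×F}, there exists a row vector p ∈ ℝ^{1×F} such that f(A, X + 𝟙·p) = f(A, X'). -/
open Matrix BigOperators

/-- One-layer linear GIN with sum readout: 𝟙ᵀ (A + (1+ε) I) X Θ as a row vector. -/
noncomputable def gin {n : Type*} [Fintype n] [DecidableEq n] {F Fp : ℕ}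
    (ε : ℝ) (Θ : Matrix (Fin F) (Fin Fp) ℝ)
    (A : Matrix n n ℝ) (X : Matrix n (Fin F) ℝ) : Fin Fp → ℝ :=
  fun j => ∑ i, ((A + (1 + ε) • (1 : Matrix n n ℝ)) * X * Θ) i j

/-- 𝟙·p : the matrix each of whose rows is the row vector p. -/
def prompt (n : Type*) {F : ℕ} (p : Fin F → ℝ) : Matrix n (Fin F) ℝ :=
  Matrix.of fun _ j => p j

theorem stmt2 (N F Fp : ℕ) (A : Matrix (Fin N) (Fin N) ℝ)
    (X X' : Matrix (Fin N) (Fin F) ℝ) (ε : ℝ) (Θ : Matrix (Fin F) (Fin Fp) ℝ)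
    (hD : (∑ i, ∑ j, A i j) + N + N * ε ≠ 0) :
    ∃ p : Fin F → ℝ, gin ε Θ A (X + prompt (Fin N) p) = gin ε Θ A X' := by
  set M := A + (1 + ε) • (1 : Matrix (Fin N) (Fin N) ℝ) with hM
  set c : ℝ := ∑ i, ∑ l, M i l with hcdef
  have hc : c ≠ 0 := by
    have : c = (∑ i, ∑ j, A i j) + N + N * ε := by
      simp only [hcdef, hM, Matrix.add_apply, Matrix.smul_apply, Matrix.one_apply,
        Finset.sum_add_distrib]
      simp [Finset.sum_ite_eq, mul_comm]
      ring
    rw [this]; exact hD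
  -- S Y k = sum of column k of M * Y
  set S : Matrix (Fin N) (Fin F) ℝ → Fin F → ℝ := fun Y k => ∑ i, (M * Y) i k with hS
  refine ⟨fun k => c⁻¹ * (S X' k - S X k), ?_⟩
  funext j
  have key : ∀ Y : Matrix (Fin N) (Fin F) ℝ, gin ε Θ A Y j = ∑ k, S Y k * Θ k j := by
    intro Y
    simp only [gin, ← hM, Matrix.mul_apply, hS]
    rw [Finset.sum_comm]
    simp [Finset.sum_mul]
  rw [key, key]
  have hSP : ∀ k, S (X + prompt (Fin N) (fun k => c⁻¹ * (S X' k - S X k))) k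
      = S X k + c * (c⁻¹ * (S X' k - S X k)) := by
    intro k
    simp only [hS, Matrix.mul_add, Matrix.add_apply, Finset.sum_add_distrib]
    congr 1
    simp only [Matrix.mul_apply, prompt, Matrix.of_apply, hcdef]
    rw [Finset.sum_mul]
    congr 1; ext i
    rw [Finset.sum_mul]
  have : ∀ k, S (X + prompt (Fin N) (fun k => c⁻¹ * (S X' k - S X k))) k = S X' k := by
    intro k
    rw [hSP k, ← mul_assoc, mul_inv_cancel₀ hc]
    ring
  simp [this]
end

section
/- Explicit prompt formula for feature transformations: with f(A, X) = 𝟙ᵀ(A + (1+ε)I)·X·Θ, set B = (A + (1+ε)I)·(X' − X) and define p = (𝟙ᵀB)/(D + N + Nε), where D = Σ_{ij}A_{ij} and D + N + Nε ≠ 0. Then f(A, X + 𝟙·p) = f(A, X'). -/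
open Matrix BigOperators

theorem stmt3 (N F Fp : ℕ) (A : Matrix (Fin N) (Fin N) ℝ)
    (X X' : Matrix (Fin N) (Fin F) ℝ) (ε : ℝ) (Θ : Matrix (Fin F) (Fin Fp) ℝ)
    (hD : (∑ i, ∑ j, A i j) + N + N * ε ≠ 0)
    (B : Matrix (Fin N) (Fin F) ℝ)
    (hB : B = (A + (1 + ε) • (1 : Matrix (Fin N) (Fin N) ℝ)) * (X' - X))
    (p : Fin F → ℝ)
    (hp : p = fun j => (∑ i, B i j) / ((∑ i, ∑ j, A i j) + N + N * ε)) :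
    gin ε Θ A (X + prompt (Fin N) p) = gin ε Θ A X' := by
  set M := A + (1 + ε) • (1 : Matrix (Fin N) (Fin N) ℝ) with hM
  have hMsum : ∑ i, ∑ l, M i l = (∑ i, ∑ j, A i j) + N + N * ε := by
    simp [hM, Matrix.add_apply, Matrix.smul_apply, Matrix.one_apply,
      Finset.sum_add_distrib, Finset.sum_ite_eq]
    ring
  have key : ∀ k, ∑ i, (M * prompt (Fin N) p) i k = ∑ i, B i k := by
    intro k
    have : ∑ i, (M * prompt (Fin N) p) i k = (∑ i, ∑ l, M i l) * p k := by
      simp [Matrix.mul_apply, prompt, Finset.sum_mul]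
    rw [this, hMsum, hp]
    simp [mul_div_assoc]
    rw [mul_div_cancel₀ _ hD]
  have hR : M * X' * Θ = M * X * Θ + B * Θ := by
    rw [hB, Matrix.mul_sub, Matrix.sub_mul]
    abel
  funext j
  simp only [gin, ← hM, Matrix.mul_add, Matrix.add_mul, hR, Matrix.add_apply,
    Finset.sum_add_distrib]
  congr 1
  simp only [Matrix.mul_apply]
  rw [Finset.sum_comm]
  conv_rhs => rw [Finset.sum_comm]
  refine Finset.sum_congr rfl fun k _ => ?_
  rw [← Finset.sum_mul, ← Finset.sum_mul]
  congr 1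
  simpa [Matrix.mul_apply] using key k
end

section
/- Link-transformation coverage: Let f(A, X) = 𝟙ᵀ(A + (1+ε)I)·X·Θ with D + N + Nε ≠ 0 where D = Σ_{ij}A_{ij}. Then for any modified adjacency matrix A' ∈ ℝ^{N×N}, there exists a row vector p ∈ ℝ^{1×F} such that f(A, X + 𝟙·p) = f(A', X). -/
open Matrix BigOperators

lemma gin_eq {n : Type*} [Fintype n] [DecidableEq n] {F Fp : ℕ}
    (ε : ℝ) (Θ : Matrix (Fin F) (Fin Fp) ℝ)
    (A : Matrix n n ℝ) (X : Matrix n (Fin F) ℝ) (j : Fin Fp) :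
    gin ε Θ A X j
      = ∑ k, ((∑ i, ∑ m, A i m * X m k) + (1 + ε) * ∑ i, X i k) * Θ k j := by
  simp only [gin, Matrix.mul_apply, Matrix.add_apply, Matrix.smul_apply,
    Matrix.one_apply, smul_eq_mul, mul_ite, mul_one, mul_zero]
  rw [Finset.sum_comm]
  refine Finset.sum_congr rfl fun k _ => ?_
  rw [← Finset.sum_mul]
  congr 1
  rw [Finset.sum_comm]
  simp [add_mul, Finset.sum_add_distrib, Finset.sum_ite_eq, Finset.mul_sum,
    Finset.sum_comm (f := fun i m => A i m * X m k)]

theorem stmt4 (N F Fp : ℕ) (A A' : Matrix (Fin N) (Fin N) ℝ)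
    (X : Matrix (Fin N) (Fin F) ℝ) (ε : ℝ) (Θ : Matrix (Fin F) (Fin Fp) ℝ)
    (hD : (∑ i, ∑ j, A i j) + N + N * ε ≠ 0) :
    ∃ p : Fin F → ℝ, gin ε Θ A (X + prompt (Fin N) p) = gin ε Θ A' X := by
  set c : ℝ := (∑ i, ∑ j, A i j) + N + N * ε with hc
  refine ⟨fun k => (∑ i, ∑ m, (A' i m - A i m) * X m k) / c, ?_⟩
  funext j
  rw [gin_eq, gin_eq]
  refine Finset.sum_congr rfl fun k _ => ?_
  congr 1
  simp only [Matrix.add_apply, prompt, Matrix.of_apply, mul_add,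
    Finset.sum_add_distrib, ← Finset.sum_mul, Finset.sum_const,
    Finset.card_univ, Fintype.card_fin, nsmul_eq_mul, sub_mul,
    Finset.sum_sub_distrib]
  field_simp
  ring
end

section
/- Explicit prompt formula for link transformations: with f(A, X) = 𝟙ᵀ(A + (1+ε)I)·X·Θ, D = Σ_{ij}A_{ij}, D + N + Nε ≠ 0, and ΔA = A' − A, the row vector p = (𝟙ᵀ·ΔA·X)/(D + N + Nε) satisfies f(A, X + 𝟙·p) = f(A', X). -/
open Matrix BigOperators

theorem stmt5 (N F Fp : ℕ) (A A' : Matrix (Fin N) (Fin N) ℝ)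
    (X : Matrix (Fin N) (Fin F) ℝ) (ε : ℝ) (Θ : Matrix (Fin F) (Fin Fp) ℝ)
    (hD : (∑ i, ∑ j, A i j) + N + N * ε ≠ 0)
    (p : Fin F → ℝ)
    (hp : p = fun j => (∑ i, ((A' - A) * X) i j) / ((∑ i, ∑ j, A i j) + N + N * ε)) :
    gin ε Θ A (X + prompt (Fin N) p) = gin ε Θ A' X := by
  have key : ∀ k, ∑ i, ((A + (1+ε) • (1:Matrix (Fin N) (Fin N) ℝ)) * (X + prompt (Fin N) p)) i k
      = ∑ i, ((A' + (1+ε) • (1:Matrix (Fin N) (Fin N) ℝ)) * X) i k := by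
    intro k
    have hpk : p k * ((∑ i, ∑ j, A i j) + N + N * ε) = ∑ i, ((A' - A) * X) i k := by
      rw [hp]; field_simp
    simp only [Matrix.mul_apply, Matrix.add_apply, Matrix.smul_apply, Matrix.one_apply,
      Matrix.sub_apply, prompt, Matrix.of_apply, mul_add, add_mul, Finset.sum_add_distrib,
      mul_ite, mul_zero, mul_one, Finset.sum_ite_eq', Finset.mem_univ, if_true] at *
    simp only [smul_eq_mul, mul_ite, mul_one, mul_zero, ite_mul, zero_mul,
      Finset.sum_ite_eq, Finset.mem_univ, if_true, ← Finset.sum_mul, Finset.sum_const,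
      Finset.card_univ, Fintype.card_fin, nsmul_eq_mul, sub_mul, Finset.sum_sub_distrib] at *
    ring_nf at *
    linarith [hpk]
  funext j
  unfold gin
  simp only [Matrix.mul_apply]
  rw [Finset.sum_comm]
  conv_rhs => rw [Finset.sum_comm]
  refine Finset.sum_congr rfl fun k _ => ?_
  rw [← Finset.sum_mul, ← Finset.sum_mul]
  simp only [← Matrix.mul_apply]
  rw [key k]
end

section
/- Combined coverage: Let f(A, X) = 𝟙ᵀ(A + (1+ε)I)·X·Θ with D + N + Nε ≠ 0 for the fixed input (A, X), D = Σ_{ij}A_{ij}. Then for any A' ∈ ℝ^{N×N} and any X' ∈ ℝ^{N×F}, there exists a row vector p ∈ ℝ^{1×F} with f(A, X + 𝟙·p) = f(A', X'). That is, GPF can simultaneously achieve any change of structure and features. -/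
open Matrix BigOperators

theorem stmt8 (N F Fp : ℕ) (A A' : Matrix (Fin N) (Fin N) ℝ)
    (X X' : Matrix (Fin N) (Fin F) ℝ) (ε : ℝ) (Θ : Matrix (Fin F) (Fin Fp) ℝ)
    (hD : (∑ i, ∑ j, A i j) + N + N * ε ≠ 0) :
    ∃ p : Fin F → ℝ, gin ε Θ A (X + prompt (Fin N) p) = gin ε Θ A' X' := by
  set c : ℝ := (∑ i, ∑ j, A i j) + N + N * ε with hc
  set M : Matrix (Fin N) (Fin N) ℝ := A + (1 + ε) • (1 : Matrix (Fin N) (Fin N) ℝ) with hM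
  set M' : Matrix (Fin N) (Fin N) ℝ := A' + (1 + ε) • (1 : Matrix (Fin N) (Fin N) ℝ) with hM'
  have hsum : ∑ i, ∑ l, M i l = c := by
    simp only [hM, Matrix.add_apply, Matrix.smul_apply, Matrix.one_apply, smul_eq_mul,
      Finset.sum_add_distrib, mul_ite, mul_one, mul_zero, Finset.sum_ite_eq,
      Finset.mem_univ, if_true, Finset.sum_const, Finset.card_univ, Fintype.card_fin,
      nsmul_eq_mul, hc]
    ring
  refine ⟨fun k => ((∑ i, ∑ l, M' i l * X' l k) - (∑ i, ∑ l, M i l * X l k)) / c, ?_⟩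
  funext j
  simp only [gin, ← hM, ← hM', Matrix.mul_apply, Matrix.add_apply, prompt, Matrix.of_apply]
  rw [Finset.sum_comm]
  conv_rhs => rw [Finset.sum_comm]
  refine Finset.sum_congr rfl fun k _ => ?_
  set d : ℝ := (∑ i, ∑ l, M' i l * X' l k) - (∑ i, ∑ l, M i l * X l k) with hd
  have h1 : ∀ i : Fin N, (∑ l, M i l * (X l k + d / c))
      = (∑ l, M i l * X l k) + (∑ l, M i l) * (d / c) := by
    intro i
    simp [mul_add, Finset.sum_add_distrib, Finset.sum_mul]
  simp only [h1, add_mul, Finset.sum_add_distrib]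
  rw [← Finset.sum_mul, ← Finset.sum_mul, ← Finset.sum_mul, hsum]
  have hcd : c * (d / c) = d := by field_simp
  rw [hcd, hd]
  conv_rhs => rw [← Finset.sum_mul]
  ring
end

section
/- Isolated-component coverage (same-dimension-output version): Let f_N(A, X) = 𝟙_Nᵀ(A + (1+ε)I_N)·X·Θ denote the readout on an N-node graph and similarly f_M on an M-node graph. Fix (A, X) with N nodes and D + N + Nε ≠ 0 (D = Σ_{ij}A_{ij}). Then for any M-node graph (A'', X'') (arbitrary M ≥ 0), there exists p ∈ ℝ^{1×F} such that f_N(A, X + 𝟙_N·p) = f_N(A, X) + f_M(A'', X''), i.e., the prompt reproduces the effect of adding an isolated component (A'', X'') to the graph. -/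
open Matrix BigOperators

theorem stmt9 (N M F Fp : ℕ) (A : Matrix (Fin N) (Fin N) ℝ)
    (X : Matrix (Fin N) (Fin F) ℝ)
    (A'' : Matrix (Fin M) (Fin M) ℝ) (X'' : Matrix (Fin M) (Fin F) ℝ)
    (ε : ℝ) (Θ : Matrix (Fin F) (Fin Fp) ℝ)
    (hD : (∑ i, ∑ j, A i j) + N + N * ε ≠ 0) :
    ∃ p : Fin F → ℝ,
      gin ε Θ A (X + prompt (Fin N) p) = gin ε Θ A X + gin ε Θ A'' X'' := by
  classical
  set B := A + (1 + ε) • (1 : Matrix (Fin N) (Fin N) ℝ) with hB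
  set c : ℝ := (∑ i, ∑ j, A i j) + N + N * ε with hcdef
  have hc : (∑ i, ∑ k, B i k) = c := by
    simp only [hB, Matrix.add_apply, Matrix.smul_apply, Matrix.one_apply, smul_eq_mul,
      Finset.sum_add_distrib, mul_ite, mul_one, mul_zero, Finset.sum_ite_eq,
      Finset.mem_univ, if_true, Finset.sum_const, Finset.card_univ, Fintype.card_fin,
      nsmul_eq_mul]
    ring
  set q : Fin F → ℝ := fun f => ∑ i, ((A'' + (1 + ε) • (1 : Matrix (Fin M) (Fin M) ℝ)) * X'') i f with hq
  refine ⟨fun f => c⁻¹ * q f, ?_⟩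
  funext j
  have key : ∑ i, (B * prompt (Fin N) (fun f => c⁻¹ * q f) * Θ) i j
      = (∑ i, ∑ k, B i k) * ∑ f, (c⁻¹ * q f) * Θ f j := by
    simp only [Matrix.mul_apply, prompt, Matrix.of_apply]
    simp only [mul_assoc, ← Finset.mul_sum, ← Finset.sum_mul]
  have target : ∑ f, q f * Θ f j = gin ε Θ A'' X'' j := by
    simp only [gin, hq, Matrix.mul_apply, Finset.sum_mul]
    rw [Finset.sum_comm]
  simp only [gin, Pi.add_apply]
  rw [← hB, Matrix.mul_add, Matrix.add_mul]
  simp only [Matrix.add_apply, Finset.sum_add_distrib]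
  rw [key, hc]
  have : ∑ f, (c⁻¹ * q f) * Θ f j = c⁻¹ * ∑ f, q f * Θ f j := by
    rw [Finset.mul_sum]; simp only [mul_assoc]
  rw [this, target, ← mul_assoc, mul_inv_cancel₀ hD, one_mul]
  simp [gin]
end

section
/- Mean-readout version of feature coverage: Let f(A, X) = (1/N)·𝟙ᵀ(A + (1+ε)I)·X·Θ (mean readout). If D + N + Nε ≠ 0 (D = Σ_{ij}A_{ij}), then for any X' ∈ ℝ^{N×F} there exists p ∈ ℝ^{1×F} with f(A, X + 𝟙·p) = f(A, X'). -/
open Matrix BigOperators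

/-- One-layer linear GIN with mean readout. -/
noncomputable def ginMean (N : ℕ) {F Fp : ℕ} (ε : ℝ) (Θ : Matrix (Fin F) (Fin Fp) ℝ)
    (A : Matrix (Fin N) (Fin N) ℝ) (X : Matrix (Fin N) (Fin F) ℝ) : Fin Fp → ℝ :=
  fun j => (1 / (N : ℝ)) * ∑ i, ((A + (1 + ε) • (1 : Matrix (Fin N) (Fin N) ℝ)) * X * Θ) i j

theorem stmt11 (N F Fp : ℕ) (hN : 0 < N) (A : Matrix (Fin N) (Fin N) ℝ)
    (X X' : Matrix (Fin N) (Fin F) ℝ) (ε : ℝ) (Θ : Matrix (Fin F) (Fin Fp) ℝ)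
    (hD : (∑ i, ∑ j, A i j) + N + N * ε ≠ 0) :
    ∃ p : Fin F → ℝ, ginMean N ε Θ A (X + prompt (Fin N) p) = ginMean N ε Θ A X' := by
  set M := A + (1 + ε) • (1 : Matrix (Fin N) (Fin N) ℝ) with hM
  set c : ℝ := (∑ i, ∑ j, A i j) + N + N * ε with hc
  have hsumM : ∑ i, ∑ j, M i j = c := by
    simp only [hM, Matrix.add_apply, Matrix.smul_apply, Matrix.one_apply, smul_eq_mul,
      mul_ite, mul_one, mul_zero, Finset.sum_add_distrib, Finset.sum_ite_eq,
      Finset.mem_univ, if_true, Finset.sum_const, Finset.card_univ, Fintype.card_fin,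
      nsmul_eq_mul, hc]
    ring
  refine ⟨fun k => (∑ i, (M * X') i k - ∑ i, (M * X) i k) / c, ?_⟩
  funext j
  simp only [ginMean]
  congr 1
  have key : ∀ Y : Matrix (Fin N) (Fin F) ℝ,
      ∑ i, (M * Y * Θ) i j = ∑ k, (∑ i, (M * Y) i k) * Θ k j := by
    intro Y
    simp only [Matrix.mul_apply, Finset.sum_mul]
    rw [Finset.sum_comm]
  rw [key, key]
  congr 1
  funext k
  congr 1
  have : ∑ i, (M * (X + prompt (Fin N) (fun k => (∑ i, (M * X') i k - ∑ i, (M * X) i k) / c))) i k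
      = ∑ i, (M * X) i k + c * ((∑ i, (M * X') i k - ∑ i, (M * X) i k) / c) := by
    rw [Matrix.mul_add]
    simp only [Matrix.add_apply, Finset.sum_add_distrib, Matrix.mul_apply, prompt, Matrix.of_apply]
    congr 1
    rw [← hsumM]
    rw [Finset.sum_mul]
    congr 1
    funext i
    rw [← Finset.sum_mul]
  rw [this]
  rw [mul_div_cancel₀ _ hD]
  ring
end

section
/- GCN-layer version of feature coverage: Let f(A, X) = 𝟙ᵀ·D̃^{-1/2}·Ã·D̃^{-1/2}·X·Θ where Ã = A + I and D̃ is the diagonal degree matrix of Ã, assumed positive on the diagonal. If the row vector s = 𝟙ᵀ·D̃^{-1/2}·Ã·D̃^{-1/2}·𝟙 is nonzero (it equals Σ_{ij}(D̃^{-1/2}ÃD̃^{-1/2})_{ij} > 0 for a symmetric nonnegative Ã with positive degrees), then for any X' ∈ ℝ^{N×F} there exists p ∈ ℝ^{1×F} with f(A, X + 𝟙·p) = f(A, X'). -/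
open Matrix BigOperators

/-- One-layer GCN with sum readout: 𝟙ᵀ D̃^(-1/2) Ã D̃^(-1/2) X Θ with Ã = A + I. -/
noncomputable def gcn (N : ℕ) {F Fp : ℕ} (Θ : Matrix (Fin F) (Fin Fp) ℝ)
    (A : Matrix (Fin N) (Fin N) ℝ) (X : Matrix (Fin N) (Fin F) ℝ) : Fin Fp → ℝ :=
  let At := A + (1 : Matrix (Fin N) (Fin N) ℝ)
  let Dh := Matrix.diagonal (fun i => (Real.sqrt (∑ j, At i j))⁻¹)
  fun j => ∑ i, (Dh * At * Dh * X * Θ) i j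

theorem stmt12 (N F Fp : ℕ) (A : Matrix (Fin N) (Fin N) ℝ)
    (X X' : Matrix (Fin N) (Fin F) ℝ) (Θ : Matrix (Fin F) (Fin Fp) ℝ)
    (hdeg : ∀ i, 0 < ∑ j, (A + (1 : Matrix (Fin N) (Fin N) ℝ)) i j)
    (hs : (∑ i, ∑ j,
        (Matrix.diagonal (fun i => (Real.sqrt (∑ j, (A + (1 : Matrix (Fin N) (Fin N) ℝ)) i j))⁻¹)
          * (A + (1 : Matrix (Fin N) (Fin N) ℝ))
          * Matrix.diagonal (fun i => (Real.sqrt (∑ j, (A + (1 : Matrix (Fin N) (Fin N) ℝ)) i j))⁻¹)) i j) ≠ 0) :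
    ∃ p : Fin F → ℝ, gcn N Θ A (X + prompt (Fin N) p) = gcn N Θ A X' := by
  classical
  set At := A + (1 : Matrix (Fin N) (Fin N) ℝ) with hAt
  set M := Matrix.diagonal (fun i => (Real.sqrt (∑ j, At i j))⁻¹) * At *
      Matrix.diagonal (fun i => (Real.sqrt (∑ j, At i j))⁻¹) with hM
  set c : ℝ := ∑ i, ∑ j, M i j with hc
  have hcne : c ≠ 0 := hs
  set p : Fin F → ℝ := fun k => c⁻¹ * ((∑ i, (M * X') i k) - (∑ i, (M * X) i k)) with hp
  refine ⟨p, ?_⟩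
  funext j
  show (∑ i, (M * (X + prompt (Fin N) p) * Θ) i j) = ∑ i, (M * X' * Θ) i j
  have key : ∀ Y : Matrix (Fin N) (Fin F) ℝ,
      (∑ i, (M * Y * Θ) i j) = ∑ k, (∑ i, (M * Y) i k) * Θ k j := by
    intro Y
    simp only [Matrix.mul_apply, Finset.sum_mul]
    rw [Finset.sum_comm]
  rw [key, key]
  have hMp : ∀ i k, (M * (X + prompt (Fin N) p)) i k
      = (M * X) i k + (∑ l, M i l) * p k := by
    intro i k
    simp [Matrix.mul_apply, prompt, mul_add, Finset.sum_add_distrib, Finset.sum_mul]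
  have hsum : ∀ k, (∑ i, (M * (X + prompt (Fin N) p)) i k) = ∑ i, (M * X') i k := by
    intro k
    simp only [hMp]
    simp only [hMp, Finset.sum_add_distrib, ← Finset.sum_mul, ← hc, hp]
    field_simp
    ring
  simp only [hsum]
end

section
/- Surjectivity of the prompt map: if Θ ∈ ℝ^{F×F'} has rank F' (the map p ↦ p·Θ is surjective onto ℝ^{1×F'}) and D + N + Nε ≠ 0, then for every target vector h ∈ ℝ^{1×F'} there exists a prompt p ∈ ℝ^{1×F} with 𝟙ᵀ(A + (1+ε)I)·(X + 𝟙·p)·Θ = h; i.e., the set of achievable prompted graph representations is all of ℝ^{F'}. -/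
open Matrix BigOperators

lemma gin_add_prompt (N F Fp : ℕ) (A : Matrix (Fin N) (Fin N) ℝ)
    (X : Matrix (Fin N) (Fin F) ℝ) (ε : ℝ) (Θ : Matrix (Fin F) (Fin Fp) ℝ)
    (p : Fin F → ℝ) (j : Fin Fp) :
    gin ε Θ A (X + prompt (Fin N) p) j =
      gin ε Θ A X j + ((∑ i, ∑ k, A i k) + N + N * ε) * (p ᵥ* Θ) j := by
  have split : gin ε Θ A (X + prompt (Fin N) p) j
      = gin ε Θ A X j + gin ε Θ A (prompt (Fin N) p) j := by
    simp [gin, Matrix.mul_add, Matrix.add_mul, Finset.sum_add_distrib]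
  rw [split]
  congr 1
  have hrow : ∀ i k, ((A + (1 + ε) • (1 : Matrix (Fin N) (Fin N) ℝ)) * prompt (Fin N) p) i k
      = ((∑ l, A i l) + (1 + ε)) * p k := by
    intro i k
    simp [Matrix.mul_apply, Matrix.add_apply, Matrix.one_apply, prompt, Finset.sum_add_distrib,
      add_mul, ← Finset.sum_mul, mul_assoc]
  have hentry : ∀ i, ((A + (1 + ε) • (1 : Matrix (Fin N) (Fin N) ℝ)) * prompt (Fin N) p * Θ) i j
      = ((∑ l, A i l) + (1 + ε)) * (p ᵥ* Θ) j := by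
    intro i
    simp [Matrix.mul_apply, hrow, Matrix.vecMul, dotProduct, Finset.mul_sum, mul_assoc]
  simp only [gin, hentry, ← Finset.sum_mul]
  congr 1
  simp [Finset.sum_add_distrib]
  ring

theorem stmt17 (N F Fp : ℕ) (A : Matrix (Fin N) (Fin N) ℝ)
    (X : Matrix (Fin N) (Fin F) ℝ) (ε : ℝ) (Θ : Matrix (Fin F) (Fin Fp) ℝ)
    (hΘ : Function.Surjective (fun q : Fin F → ℝ => q ᵥ* Θ))
    (hD : (∑ i, ∑ j, A i j) + N + N * ε ≠ 0) :
    ∀ h : Fin Fp → ℝ, ∃ p : Fin F → ℝ, gin ε Θ A (X + prompt (Fin N) p) = h := by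
  intro h
  set c : ℝ := (∑ i, ∑ j, A i j) + N + N * ε with hc
  obtain ⟨q, hq⟩ := hΘ (c⁻¹ • (h - gin ε Θ A X))
  refine ⟨q, funext fun j => ?_⟩
  rw [gin_add_prompt, show q ᵥ* Θ = c⁻¹ • (h - gin ε Θ A X) from hq]
  simp only [Pi.smul_apply, Pi.sub_apply, smul_eq_mul]
  field_simp
  rw [← hc]
  ring
end

section
/- Per-node uniform prompting equals per-node independent perturbation at the readout level: for f(A, X) = 𝟙ᵀ(A + (1+ε)I)·X·Θ with D + N + Nε ≠ 0, and for any matrix ΔX ∈ ℝ^{N×F} of independent per-node feature perturbations, the single shared vector p = (𝟙ᵀ(A + (1+ε)I)·ΔX)/(D + N + Nε) ∈ ℝ^{1×F} satisfies f(A, X + 𝟙·p) = f(A, X + ΔX); thus F parameters suffice to emulate any N×F-parameter perturbation. -/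
open Matrix BigOperators

theorem stmt18 (N F Fp : ℕ) (A : Matrix (Fin N) (Fin N) ℝ)
    (X ΔX : Matrix (Fin N) (Fin F) ℝ) (ε : ℝ) (Θ : Matrix (Fin F) (Fin Fp) ℝ)
    (hD : (∑ i, ∑ j, A i j) + N + N * ε ≠ 0)
    (p : Fin F → ℝ)
    (hp : p = fun j =>
      (∑ i, ((A + (1 + ε) • (1 : Matrix (Fin N) (Fin N) ℝ)) * ΔX) i j)
        / ((∑ i, ∑ j, A i j) + N + N * ε)) :
    gin ε Θ A (X + prompt (Fin N) p) = gin ε Θ A (X + ΔX) := by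
  set M := A + (1 + ε) • (1 : Matrix (Fin N) (Fin N) ℝ) with hM
  have hMsum : ∑ i, ∑ k, M i k = (∑ i, ∑ j, A i j) + N + N * ε := by
    simp only [hM, Matrix.add_apply, Matrix.smul_apply, Matrix.one_apply, smul_eq_mul,
      Finset.sum_add_distrib, mul_ite, mul_one, mul_zero, Finset.sum_ite_eq,
      Finset.mem_univ, if_true, Finset.sum_const, Finset.card_univ, Fintype.card_fin,
      nsmul_eq_mul]
    ring
  have key : ∀ j, ∑ i, (M * prompt (Fin N) p) i j = ∑ i, (M * ΔX) i j := by
    intro j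
    have : ∑ i, (M * prompt (Fin N) p) i j = (∑ i, ∑ k, M i k) * p j := by
      simp [Matrix.mul_apply, prompt, Finset.sum_mul]
    rw [this, hMsum, hp]
    field_simp
  funext j
  simp only [gin, Matrix.mul_apply]
  rw [Finset.sum_comm]
  conv_rhs => rw [Finset.sum_comm]
  refine Finset.sum_congr rfl fun k _ => ?_
  rw [← Finset.sum_mul, ← Finset.sum_mul]
  congr 1
  have h1 : ∀ (Y : Matrix (Fin N) (Fin F) ℝ),
      ∑ i, (M * (X + Y)) i k = ∑ i, (M * X) i k + ∑ i, (M * Y) i k := by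
    intro Y
    simp [Matrix.mul_add, Matrix.add_apply, Finset.sum_add_distrib]
  simp only [← hM, ← Matrix.mul_apply]
  rw [h1, h1, key]
end
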